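/- arXiv:2311.04790 — 2 statements merged into one kernel-verified Lean document; each statement's English description precedes it below -/
import Mathlib

section
/- Under the stated hypotheses, for every 𝗑 ∈ X the map ω ↦ L_ω*(J_{A_ω}(L_ω 𝗑)) is Bochner μ-integrable, the operator X → X : 𝗑 ↦ ∫_Ω L_ω*(J_{A_ω}(L_ω 𝗑)) μ(dω) is firmly nonexpansive, and it equals the resolvent J_W = (Id_X + W)⁻¹ of the integral resolvent mixture W = rmi(L_ω, A_ω)_{ω∈Ω}. -/
open MeasureTheory
open scoped ENNReal NNReal

/-- A set-valued operator `A : H → Set H` (identified with its graph) is monotone if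
`⟪x − y, u − v⟫ ≥ 0` whenever `u ∈ A x` and `v ∈ A y`. -/
def IsMonotoneOp {H : Type*} [NormedAddCommGroup H] [InnerProductSpace ℝ H]
    (A : H → Set H) : Prop :=
  ∀ ⦃x u y v : H⦄, u ∈ A x → v ∈ A y → (0 : ℝ) ≤ inner ℝ (x - y) (u - v)

/-- `A` is maximally monotone: it is monotone and its graph is not properly contained in the
graph of any monotone operator. -/
def IsMaxMonotone {H : Type*} [NormedAddCommGroup H] [InnerProductSpace ℝ H]
    (A : H → Set H) : Prop :=
  IsMonotoneOp A ∧ ∀ B : H → Set H, IsMonotoneOp B → (∀ x, A x ⊆ B x) → ∀ x, B x ⊆ A x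

/-- The inverse operator `A⁻¹`, whose graph is `{(u, x) : (x, u) ∈ gra A}`. -/
def graphInv {H : Type*} (A : H → Set H) : H → Set H := fun u => {x | u ∈ A x}

/-- `J` is the resolvent `(Id + A)⁻¹` of `A` (as a single-valued, everywhere-defined map):
`J x = y ↔ x − y ∈ A y`. -/
def IsResolventOf {H : Type*} [AddCommGroup H] (A : H → Set H) (J : H → H) : Prop :=
  ∀ x y, J x = y ↔ x - y ∈ A y

/-- For a single-valued map `R : X → X`, `rmiOp R = R⁻¹ − Id` as a set-valued operator:
`u ∈ (R⁻¹ − Id)(x) ↔ R (x + u) = x`. -/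
def rmiOp {X : Type*} [AddCommGroup X] (R : X → X) : X → Set X :=
  fun x => {u | R (x + u) = x}


/-- Pettis measurability: in a separable Hilbert space, weak measurability implies
measurability. -/
lemma measurable_of_inner_measurable {Ω X : Type*} [MeasurableSpace Ω]
    [NormedAddCommGroup X] [InnerProductSpace ℝ X] [CompleteSpace X]
    [SecondCountableTopology X] [MeasurableSpace X] [BorelSpace X]
    (g : Ω → X) (h : ∀ ξ : X, Measurable fun ω => (inner ℝ (g ω) ξ : ℝ)) :
    Measurable g := by
  obtain ⟨D, hD⟩ := TopologicalSpace.exists_dense_seq X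
  have hnorm : ∀ c : X, Measurable fun ω => ‖g ω - c‖ := by
    intro c
    have key : ∀ v : X, ‖v - c‖ ^ 2
        = ⨆ n, (2 * (inner ℝ (v - c) (D n) : ℝ) - ‖D n‖ ^ 2) := by
      intro v
      set w := v - c with hw
      have hub : ∀ n, 2 * (inner ℝ w (D n) : ℝ) - ‖D n‖ ^ 2 ≤ ‖w‖ ^ 2 := by
        intro n
        have h1 := norm_sub_sq_real w (D n)
        nlinarith [sq_nonneg (‖w - D n‖)]
      have hbdd : BddAbove (Set.range fun n => 2 * (inner ℝ w (D n) : ℝ) - ‖D n‖ ^ 2) :=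
        ⟨‖w‖ ^ 2, by rintro _ ⟨n, rfl⟩; exact hub n⟩
      refine le_antisymm ?_ (ciSup_le hub)
      refine le_of_forall_pos_le_add ?_
      intro ε hε
      obtain ⟨n, hn⟩ := hD.exists_dist_lt w (Real.sqrt_pos.2 hε)
      have hn' : ‖w - D n‖ ^ 2 < ε := by
        have : ‖w - D n‖ < Real.sqrt ε := by rwa [dist_eq_norm] at hn
        nlinarith [norm_nonneg (w - D n), Real.sq_sqrt hε.le, Real.sqrt_nonneg ε]
      have h1 := norm_sub_sq_real w (D n)
      have h2 : 2 * (inner ℝ w (D n) : ℝ) - ‖D n‖ ^ 2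
          ≤ ⨆ n, (2 * (inner ℝ w (D n) : ℝ) - ‖D n‖ ^ 2) := le_ciSup hbdd n
      linarith
    have hsq : Measurable fun ω => ‖g ω - c‖ ^ 2 := by
      have : (fun ω => ‖g ω - c‖ ^ 2)
          = fun ω => ⨆ n, (2 * ((inner ℝ (g ω) (D n) : ℝ) - inner ℝ c (D n)) - ‖D n‖ ^ 2) := by
        funext ω
        simp_rw [← inner_sub_left]
        exact key (g ω)
      rw [this]
      exact Measurable.iSup fun n => (((h (D n)).sub_const _).const_mul 2).sub_const _
    have : (fun ω => ‖g ω - c‖) = fun ω => Real.sqrt (‖g ω - c‖ ^ 2) := by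
      funext ω; rw [Real.sqrt_sq (norm_nonneg _)]
    rw [this]
    exact Real.continuous_sqrt.measurable.comp hsq
  set e : X → (ℕ → ℝ) := fun x n => ‖x - D n‖ with he
  have he_cont : Continuous e :=
    continuous_pi fun n => (continuous_id.sub continuous_const).norm
  have he_inj : Function.Injective e := by
    intro a b hab
    have h1 : ∀ n, ‖a - D n‖ = ‖b - D n‖ := fun n => congrFun hab n
    by_contra hne
    have hd : 0 < dist a b := dist_pos.2 hne
    obtain ⟨n, hn⟩ := hD.exists_dist_lt a (half_pos hd)
    have : dist a b ≤ dist a (D n) + dist (D n) b := dist_triangle _ _ _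
    have e1 : dist a (D n) = ‖a - D n‖ := dist_eq_norm _ _
    have e2 : dist (D n) b = ‖b - D n‖ := by rw [dist_comm, dist_eq_norm]
    rw [e1, e2, ← h1 n, ← e1] at this
    linarith
  have hemb : MeasurableEmbedding e := he_cont.measurableEmbedding he_inj
  have : Measurable (e ∘ g) := measurable_pi_iff.2 fun n => hnorm (D n)
  exact hemb.measurable_comp_iff.1 this

lemma firm_of_resolvent {H : Type*} [NormedAddCommGroup H] [InnerProductSpace ℝ H]
    {A : H → Set H} {J : H → H} (hmono : IsMonotoneOp A) (hJ : IsResolventOf A J)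
    (a b : H) : ‖J a - J b‖ ^ 2 ≤ inner ℝ (a - b) (J a - J b) := by
  have ha : a - J a ∈ A (J a) := (hJ a (J a)).1 rfl
  have hb : b - J b ∈ A (J b) := (hJ b (J b)).1 rfl
  have hm := hmono ha hb
  have h1 : (a - J a) - (b - J b) = (a - b) - (J a - J b) := by abel
  rw [h1, inner_sub_right, real_inner_self_eq_norm_sq, real_inner_comm] at hm
  linarith

lemma nonexp_of_resolvent {H : Type*} [NormedAddCommGroup H] [InnerProductSpace ℝ H]
    {A : H → Set H} {J : H → H} (hmono : IsMonotoneOp A) (hJ : IsResolventOf A J)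
    (a b : H) : ‖J a - J b‖ ≤ ‖a - b‖ := by
  have h1 := firm_of_resolvent hmono hJ a b
  have h2 : (inner ℝ (a - b) (J a - J b) : ℝ) ≤ ‖a - b‖ * ‖J a - J b‖ :=
    real_inner_le_norm _ _
  rcases eq_or_lt_of_le (norm_nonneg (J a - J b)) with h | h
  · rw [← h]; exact norm_nonneg _
  · nlinarith

set_option maxHeartbeats 1000000 in
/-- Theorem 3.5(v): for every `ξ ∈ X` the map `ω ↦ L_ω*(J_{A_ω}(L_ω ξ))` is
Bochner `μ`-integrable, the operator `R : ξ ↦ ∫ L_ω*(J_{A_ω}(L_ω ξ)) dμ` is firmly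
nonexpansive, and `R` is the resolvent `J_W = (Id + W)⁻¹` of `W = rmi(L_ω, A_ω)`. -/
theorem stmt_4
    {Ω : Type*} [MeasurableSpace Ω] {μ : Measure Ω} [SigmaFinite μ] [μ.IsComplete]
    {X : Type*} [NormedAddCommGroup X] [InnerProductSpace ℝ X] [CompleteSpace X]
    [SecondCountableTopology X] [MeasurableSpace X] [BorelSpace X]
    {H : Type*} [NormedAddCommGroup H] [InnerProductSpace ℝ H] [CompleteSpace H]
    [SecondCountableTopology H] [MeasurableSpace H] [BorelSpace H]
    -- the family of maximally monotone operators, with its resolvents `JA ω = J_{A_ω}`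
    -- and the resolvents `JAinv ω = J_{A_ω⁻¹}` of the inverses
    (A : Ω → H → Set H) (JA JAinv : Ω → H → H)
    (hAmax : ∀ ω, IsMaxMonotone (A ω))
    (hJA : ∀ ω, IsResolventOf (A ω) (JA ω))
    (hJAinv : ∀ ω, IsResolventOf (graphInv (A ω)) (JAinv ω))
    (hJAmeas : ∀ x : Ω → H, Measurable x → Measurable fun ω => JA ω (x ω))
    (hdom : ∃ x xs : Ω → H, Measurable x ∧ Measurable xs ∧
      (∫⁻ ω, (‖x ω‖₊ : ℝ≥0∞) ^ 2 ∂μ) < ⊤ ∧ (∫⁻ ω, (‖xs ω‖₊ : ℝ≥0∞) ^ 2 ∂μ) < ⊤ ∧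
      ∀ᵐ ω ∂μ, xs ω ∈ A ω (x ω))
    -- the family of bounded linear operators
    (L : Ω → X →L[ℝ] H)
    (hLmeas : ∀ ξ : X, Measurable fun ω => L ω ξ)
    (hLint : Integrable (fun ω => ‖L ω‖ ^ 2) μ)
    (hL0 : 0 < ∫ ω, ‖L ω‖ ^ 2 ∂μ) (hL1 : (∫ ω, ‖L ω‖ ^ 2 ∂μ) ≤ 1)
    :
    (∀ ξ : X, Integrable (fun ω => (L ω).adjoint (JA ω (L ω ξ))) μ) ∧
    (∀ ξ η : X,
      ‖(∫ ω, (L ω).adjoint (JA ω (L ω ξ)) ∂μ) - ∫ ω, (L ω).adjoint (JA ω (L ω η)) ∂μ‖ ^ 2 ≤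
        inner ℝ (ξ - η)
          ((∫ ω, (L ω).adjoint (JA ω (L ω ξ)) ∂μ) - ∫ ω, (L ω).adjoint (JA ω (L ω η)) ∂μ)) ∧
    IsResolventOf (rmiOp fun ξ : X => ∫ ω, (L ω).adjoint (JA ω (L ω ξ)) ∂μ)
      (fun ξ : X => ∫ ω, (L ω).adjoint (JA ω (L ω ξ)) ∂μ) := by
    classical
  obtain ⟨x, xs, hx, hxs, hxL, hxsL, hmem⟩ := hdom
  -- resolvents are firmly nonexpansive
  have firm : ∀ (ω : Ω) (a b : H),
      ‖JA ω a - JA ω b‖ ^ 2 ≤ inner ℝ (a - b) (JA ω a - JA ω b) :=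
    fun ω => firm_of_resolvent (hAmax ω).1 (hJA ω)
  have nonexp : ∀ (ω : Ω) (a b : H), ‖JA ω a - JA ω b‖ ≤ ‖a - b‖ :=
    fun ω => nonexp_of_resolvent (hAmax ω).1 (hJA ω)
  set F : X → Ω → X := fun ξ ω => (L ω).adjoint (JA ω (L ω ξ)) with hFdef
  have hJmeas : ∀ ξ : X, Measurable fun ω => JA ω (L ω ξ) :=
    fun ξ => hJAmeas _ (hLmeas ξ)
  have hFmeas : ∀ ξ : X, Measurable (F ξ) := by
    intro ξ
    apply measurable_of_inner_measurable
    intro η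
    have : (fun ω => (inner ℝ (F ξ ω) η : ℝ))
        = fun ω => (inner ℝ (JA ω (L ω ξ)) (L ω η) : ℝ) := by
      funext ω
      exact ContinuousLinearMap.adjoint_inner_left (L ω) η (JA ω (L ω ξ))
    rw [this]
    exact (hJmeas ξ).inner (hLmeas η)
  have hadjnorm : ∀ (ω : Ω) (v : H), ‖(L ω).adjoint v‖ ≤ ‖L ω‖ * ‖v‖ := by
    intro ω v
    have h1 := ((L ω).adjoint).le_opNorm v
    have h2 : ‖(L ω).adjoint‖ = ‖L ω‖ :=
      LinearIsometryEquiv.norm_map ContinuousLinearMap.adjoint (L ω)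
    rwa [h2] at h1
  -- square-integrability of x, xs
  have hx2 : Integrable (fun ω => ‖x ω‖ ^ 2) μ := by
    refine ⟨(hx.norm.pow_const 2).aestronglyMeasurable, ?_⟩
    rw [HasFiniteIntegral]
    simpa [nnnorm_pow, nnnorm_norm, ENNReal.coe_pow, enorm_eq_nnnorm] using hxL
  have hxs2 : Integrable (fun ω => ‖xs ω‖ ^ 2) μ := by
    refine ⟨(hxs.norm.pow_const 2).aestronglyMeasurable, ?_⟩
    rw [HasFiniteIntegral]
    simpa [nnnorm_pow, nnnorm_norm, ENNReal.coe_pow, enorm_eq_nnnorm] using hxsL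
  have hJx : ∀ᵐ ω ∂μ, JA ω (x ω + xs ω) = x ω := by
    filter_upwards [hmem] with ω hω
    exact (hJA ω _ _).2 (by simpa using hω)
  -- part 1 : integrability
  have hint : ∀ ξ : X, Integrable (F ξ) μ := by
    intro ξ
    have hG : Integrable (fun ω =>
        ‖ξ‖ * ‖L ω‖ ^ 2 + (3/2) * ‖L ω‖ ^ 2 + ‖x ω‖ ^ 2 + (1/2) * ‖xs ω‖ ^ 2) μ :=
      (((hLint.const_mul ‖ξ‖).add (hLint.const_mul (3/2))).add hx2).add
        (hxs2.const_mul (1/2))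
    refine hG.mono' (hFmeas ξ).aestronglyMeasurable ?_
    filter_upwards [hJx] with ω hω
    have h1 : ‖F ξ ω‖ ≤ ‖L ω‖ * ‖JA ω (L ω ξ)‖ := hadjnorm ω _
    have h2 : ‖JA ω (L ω ξ) - x ω‖ ≤ ‖L ω ξ - (x ω + xs ω)‖ := by
      have := nonexp ω (L ω ξ) (x ω + xs ω)
      rwa [hω] at this
    have h3 : ‖JA ω (L ω ξ)‖ ≤ ‖JA ω (L ω ξ) - x ω‖ + ‖x ω‖ := by
      simpa using norm_add_le (JA ω (L ω ξ) - x ω) (x ω)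
    have h4 : ‖L ω ξ - (x ω + xs ω)‖ ≤ ‖L ω‖ * ‖ξ‖ + ‖x ω‖ + ‖xs ω‖ := by
      calc ‖L ω ξ - (x ω + xs ω)‖ ≤ ‖L ω ξ‖ + ‖x ω + xs ω‖ := norm_sub_le _ _
        _ ≤ ‖L ω ξ‖ + (‖x ω‖ + ‖xs ω‖) := by gcongr; exact norm_add_le _ _
        _ ≤ ‖L ω‖ * ‖ξ‖ + (‖x ω‖ + ‖xs ω‖) := by gcongr; exact (L ω).le_opNorm ξ
        _ = ‖L ω‖ * ‖ξ‖ + ‖x ω‖ + ‖xs ω‖ := by ring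
    have h5 : ‖JA ω (L ω ξ)‖ ≤ ‖L ω‖ * ‖ξ‖ + 2 * ‖x ω‖ + ‖xs ω‖ := by linarith
    have h6 : ‖L ω‖ * ‖JA ω (L ω ξ)‖
        ≤ ‖L ω‖ * (‖L ω‖ * ‖ξ‖ + 2 * ‖x ω‖ + ‖xs ω‖) :=
      mul_le_mul_of_nonneg_left h5 (norm_nonneg _)
    have hL := norm_nonneg (L ω)
    nlinarith [sq_nonneg (‖L ω‖ - ‖x ω‖), sq_nonneg (‖L ω‖ - ‖xs ω‖)]
  refine ⟨hint, ?_, ?_⟩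
  · -- part 2 : firm nonexpansiveness
    intro ξ η
    set d : Ω → H := fun ω => JA ω (L ω ξ) - JA ω (L ω η) with hd
    have hdmeas : Measurable d := (hJmeas ξ).sub (hJmeas η)
    have hdle : ∀ ω, ‖d ω‖ ≤ ‖L ω‖ * ‖ξ - η‖ := by
      intro ω
      calc ‖d ω‖ ≤ ‖L ω ξ - L ω η‖ := nonexp ω _ _
        _ = ‖L ω (ξ - η)‖ := by rw [map_sub]
        _ ≤ ‖L ω‖ * ‖ξ - η‖ := (L ω).le_opNorm _
    have hd2int : Integrable (fun ω => ‖d ω‖ ^ 2) μ := by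
      refine (hLint.mul_const (‖ξ - η‖ ^ 2)).mono'
        (hdmeas.norm.pow_const 2).aestronglyMeasurable ?_
      filter_upwards with ω
      rw [Real.norm_of_nonneg (sq_nonneg _)]
      calc ‖d ω‖ ^ 2 ≤ (‖L ω‖ * ‖ξ - η‖) ^ 2 := by
            have := hdle ω
            nlinarith [norm_nonneg (d ω)]
        _ = ‖L ω‖ ^ 2 * ‖ξ - η‖ ^ 2 := by ring
    have hsubint : Integrable (fun ω => F ξ ω - F η ω) μ := (hint ξ).sub (hint η)
    have hRdiff : (∫ ω, F ξ ω ∂μ) - (∫ ω, F η ω ∂μ) = ∫ ω, (F ξ ω - F η ω) ∂μ :=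
      (integral_sub (hint ξ) (hint η)).symm
    have hFd : ∀ ω, F ξ ω - F η ω = (L ω).adjoint (d ω) := by
      intro ω; rw [hd]; simp [hFdef, map_sub]
    have heq : (fun ω => (inner ℝ (ξ - η) (F ξ ω - F η ω) : ℝ))
        = fun ω => (inner ℝ (L ω (ξ - η)) (d ω) : ℝ) := by
      funext ω
      rw [hFd ω, real_inner_comm,
        ContinuousLinearMap.adjoint_inner_left (L ω) (ξ - η) (d ω), real_inner_comm]
    have hinnerint : Integrable (fun ω => (inner ℝ (L ω (ξ - η)) (d ω) : ℝ)) μ := by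
      rw [← heq]; exact hsubint.const_inner (ξ - η)
    have hinner : (inner ℝ (ξ - η) ((∫ ω, F ξ ω ∂μ) - ∫ ω, F η ω ∂μ) : ℝ)
        = ∫ ω, (inner ℝ (L ω (ξ - η)) (d ω) : ℝ) ∂μ := by
      rw [hRdiff, ← integral_inner hsubint (ξ - η), ← heq]
    have hlow : (∫ ω, ‖d ω‖ ^ 2 ∂μ)
        ≤ ∫ ω, (inner ℝ (L ω (ξ - η)) (d ω) : ℝ) ∂μ := by
      refine integral_mono hd2int hinnerint ?_
      intro ω
      have := firm ω (L ω ξ) (L ω η)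
      rwa [← map_sub] at this
    -- ae strong measurability of ‖L ·‖
    have hLnormmeas : AEStronglyMeasurable (fun ω => ‖L ω‖) μ := by
      have h1 : AEStronglyMeasurable (fun ω => Real.sqrt (‖L ω‖ ^ 2)) μ :=
        (Real.continuous_sqrt.comp_aestronglyMeasurable hLint.aestronglyMeasurable)
      simpa [Real.sqrt_sq (norm_nonneg _)] using h1
    have hLdint : Integrable (fun ω => ‖L ω‖ * ‖d ω‖) μ := by
      refine (hLint.mul_const ‖ξ - η‖).mono'
        (hLnormmeas.mul hdmeas.norm.aestronglyMeasurable) ?_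
      filter_upwards with ω
      rw [Real.norm_of_nonneg (mul_nonneg (norm_nonneg _) (norm_nonneg _))]
      calc ‖L ω‖ * ‖d ω‖ ≤ ‖L ω‖ * (‖L ω‖ * ‖ξ - η‖) :=
            mul_le_mul_of_nonneg_left (hdle ω) (norm_nonneg _)
        _ = ‖L ω‖ ^ 2 * ‖ξ - η‖ := by ring
    have hn : ‖(∫ ω, F ξ ω ∂μ) - ∫ ω, F η ω ∂μ‖ ≤ ∫ ω, ‖L ω‖ * ‖d ω‖ ∂μ := by
      rw [hRdiff]
      refine (norm_integral_le_integral_norm _).trans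
        (integral_mono hsubint.norm hLdint ?_)
      intro ω
      show ‖F ξ ω - F η ω‖ ≤ ‖L ω‖ * ‖d ω‖
      rw [hFd ω]
      exact hadjnorm ω (d ω)
    -- Cauchy-Schwarz
    have hpq : Real.HolderConjugate 2 2 := Real.holderConjugate_iff.mpr ⟨one_lt_two, by norm_num⟩
    have hMemL : MemLp (fun ω => ‖L ω‖) (ENNReal.ofReal (2:ℝ)) μ := by
      rw [show ENNReal.ofReal (2:ℝ) = 2 by norm_num]
      exact (memLp_two_iff_integrable_sq hLnormmeas).2 hLint
    have hMemd : MemLp (fun ω => ‖d ω‖) (ENNReal.ofReal (2:ℝ)) μ := by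
      rw [show ENNReal.ofReal (2:ℝ) = 2 by norm_num]
      exact (memLp_two_iff_integrable_sq hdmeas.norm.aestronglyMeasurable).2 hd2int
    have hCS := MeasureTheory.integral_mul_le_Lp_mul_Lq_of_nonneg hpq
      (Filter.Eventually.of_forall fun ω => norm_nonneg (L ω))
      (Filter.Eventually.of_forall fun ω => norm_nonneg (d ω)) hMemL hMemd
    simp only [Real.rpow_two] at hCS
    -- combine
    have hdnn : (0:ℝ) ≤ ∫ ω, ‖d ω‖ ^ 2 ∂μ := integral_nonneg fun ω => sq_nonneg _
    have hLex : ((∫ ω, ‖L ω‖ ^ 2 ∂μ) ^ ((1:ℝ)/2)) ^ 2 = ∫ ω, ‖L ω‖ ^ 2 ∂μ := by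
      rw [← Real.rpow_natCast ((∫ ω, ‖L ω‖ ^ 2 ∂μ) ^ ((1:ℝ)/2)) 2,
        ← Real.rpow_mul hL0.le]
      norm_num
    have hdex : ((∫ ω, ‖d ω‖ ^ 2 ∂μ) ^ ((1:ℝ)/2)) ^ 2 = ∫ ω, ‖d ω‖ ^ 2 ∂μ := by
      rw [← Real.rpow_natCast ((∫ ω, ‖d ω‖ ^ 2 ∂μ) ^ ((1:ℝ)/2)) 2,
        ← Real.rpow_mul hdnn]
      norm_num
    calc ‖(∫ ω, F ξ ω ∂μ) - ∫ ω, F η ω ∂μ‖ ^ 2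
        ≤ ((∫ ω, ‖L ω‖ ^ 2 ∂μ) ^ ((1:ℝ)/2) * (∫ ω, ‖d ω‖ ^ 2 ∂μ) ^ ((1:ℝ)/2)) ^ 2 := by
          have h := hn.trans hCS
          have hnn := norm_nonneg ((∫ ω, F ξ ω ∂μ) - ∫ ω, F η ω ∂μ)
          nlinarith
      _ = (∫ ω, ‖L ω‖ ^ 2 ∂μ) * (∫ ω, ‖d ω‖ ^ 2 ∂μ) := by
          rw [mul_pow, hLex, hdex]
      _ ≤ 1 * (∫ ω, ‖d ω‖ ^ 2 ∂μ) := mul_le_mul_of_nonneg_right hL1 hdnn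
      _ = ∫ ω, ‖d ω‖ ^ 2 ∂μ := one_mul _
      _ ≤ inner ℝ (ξ - η) ((∫ ω, F ξ ω ∂μ) - ∫ ω, F η ω ∂μ) := by
          rw [hinner]; exact hlow
  · -- part 3 : resolvent identity
    intro a b
    simp only [rmiOp, Set.mem_setOf_eq, show b + (a - b) = a from by abel]
end

section
/- Under the stated hypotheses, let τ > 0, suppose that every A_ω is single-valued with dom A_ω = H and τ-cocoercive (⟨x − y, A_ω x − A_ω y⟩ ≥ τ‖A_ω x − A_ω y‖² for all x, y ∈ H), and set δ = (τ + 1)/∫_Ω ‖L_ω‖² μ(dω) − 1. Then the integral resolvent comixture C = rcm(L_ω, A_ω)_{ω∈Ω} is δ-cocoercive. -/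
open MeasureTheory
open scoped ENNReal NNReal

private lemma normsq_eq_ciSup {X : Type*} [NormedAddCommGroup X] [InnerProductSpace ℝ X]
    {d : ℕ → X} (hd : DenseRange d) (w : X) :
    ‖w‖ ^ 2 = ⨆ n, (2 * (inner ℝ w (d n) : ℝ) - ‖d n‖ ^ 2) := by
  have key : ∀ n, 2 * (inner ℝ w (d n) : ℝ) - ‖d n‖ ^ 2 = ‖w‖ ^ 2 - ‖w - d n‖ ^ 2 := by
    intro n
    have := norm_sub_sq_real w (d n)
    linarith
  have hb : ∀ n, 2 * (inner ℝ w (d n) : ℝ) - ‖d n‖ ^ 2 ≤ ‖w‖ ^ 2 := by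
    intro n; rw [key n]; nlinarith [sq_nonneg ‖w - d n‖]
  have bdd : BddAbove (Set.range fun n => 2 * (inner ℝ w (d n) : ℝ) - ‖d n‖ ^ 2) :=
    ⟨‖w‖ ^ 2, by rintro _ ⟨n, rfl⟩; exact hb n⟩
  refine le_antisymm ?_ (ciSup_le hb)
  refine le_of_forall_lt fun c hc => ?_
  obtain ⟨n, hn⟩ := hd.exists_dist_lt w (Real.sqrt_pos.2 (by linarith) : (0:ℝ) < Real.sqrt (‖w‖^2 - c))
  have hn2 : ‖w - d n‖ ^ 2 < ‖w‖ ^ 2 - c := by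
    have h0 : dist w (d n) = ‖w - d n‖ := dist_eq_norm _ _
    have := Real.sq_sqrt (show (0:ℝ) ≤ ‖w‖^2 - c by linarith)
    nlinarith [norm_nonneg (w - d n), Real.sqrt_nonneg (‖w‖^2 - c)]
  calc c < 2 * (inner ℝ w (d n) : ℝ) - ‖d n‖ ^ 2 := by rw [key n]; linarith
    _ ≤ _ := le_ciSup bdd n

private lemma measurable_of_inner_meas {Ω X : Type*} [MeasurableSpace Ω]
    [NormedAddCommGroup X] [InnerProductSpace ℝ X] [SecondCountableTopology X]
    [MeasurableSpace X] [BorelSpace X] {f : Ω → X}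
    (h : ∀ c : X, Measurable fun ω => (inner ℝ (f ω) c : ℝ)) : Measurable f := by
  classical
  haveI : Nonempty X := ⟨0⟩
  set d := TopologicalSpace.denseSeq X with hd_def
  have hd : DenseRange d := TopologicalSpace.denseRange_denseSeq X
  have hdist : ∀ c : X, Measurable fun ω => dist (f ω) c := by
    intro c
    have heq : (fun ω => dist (f ω) c)
        = fun ω => Real.sqrt (⨆ n, (2 * (inner ℝ (f ω - c) (d n) : ℝ) - ‖d n‖ ^ 2)) := by
      funext ω
      rw [← normsq_eq_ciSup hd (f ω - c), dist_eq_norm, Real.sqrt_sq (norm_nonneg _)]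
    rw [heq]
    apply Measurable.sqrt
    apply Measurable.iSup
    intro n
    have : (fun ω => 2 * (inner ℝ (f ω - c) (d n) : ℝ) - ‖d n‖ ^ 2)
        = fun ω => 2 * ((inner ℝ (f ω) (d n) : ℝ) - (inner ℝ c (d n) : ℝ)) - ‖d n‖ ^ 2 := by
      funext ω; rw [inner_sub_left]
    rw [this]
    exact (((h (d n)).sub measurable_const).const_mul 2).sub measurable_const
  apply measurable_of_isOpen
  intro s hs
  have hset : f ⁻¹' s = ⋃ n, ⋃ q : ℚ,
      if Metric.ball (d n) q ⊆ s then {ω | dist (f ω) (d n) < q} else ∅ := by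
    ext ω
    simp only [Set.mem_preimage, Set.mem_iUnion]
    constructor
    · intro hω
      obtain ⟨ε, hε, hball⟩ := Metric.isOpen_iff.1 hs (f ω) hω
      obtain ⟨q, hq0, hq⟩ := exists_rat_btwn (half_pos hε)
      have hq0' : (0:ℝ) < q := by exact_mod_cast hq0
      obtain ⟨n, hn⟩ := hd.exists_dist_lt (f ω) hq0'
      refine ⟨n, q, ?_⟩
      have hsub : Metric.ball (d n) q ⊆ s := by
        intro z hz
        apply hball
        rw [Metric.mem_ball] at hz ⊢
        calc dist z (f ω) ≤ dist z (d n) + dist (d n) (f ω) := dist_triangle _ _ _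
          _ < q + q := by rw [dist_comm (d n) (f ω)]; linarith
          _ < ε := by linarith
      rw [if_pos hsub]
      exact hn
    · rintro ⟨n, q, hω⟩
      by_cases hsub : Metric.ball (d n) q ⊆ s
      · rw [if_pos hsub] at hω
        exact hsub (Metric.mem_ball.2 hω)
      · rw [if_neg hsub] at hω; exact absurd hω (Set.notMem_empty ω)
  rw [hset]
  refine MeasurableSet.iUnion fun n => MeasurableSet.iUnion fun q => ?_
  split_ifs
  · exact (hdist (d n)) measurableSet_Iio
  · exact MeasurableSet.empty

set_option maxHeartbeats 1000000 in
/-- Theorem 3.5(xii): if `τ > 0` and every `A_ω` is single-valued with full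
domain and `τ`-cocoercive, then the integral resolvent comixture `C = rcm(L_ω, A_ω)` is
`δ`-cocoercive with `δ = (τ + 1)/∫ ‖L_ω‖² dμ − 1`. -/
theorem stmt_9
    {Ω : Type*} [MeasurableSpace Ω] {μ : Measure Ω} [SigmaFinite μ] [μ.IsComplete]
    {X : Type*} [NormedAddCommGroup X] [InnerProductSpace ℝ X] [CompleteSpace X]
    [SecondCountableTopology X] [MeasurableSpace X] [BorelSpace X]
    {H : Type*} [NormedAddCommGroup H] [InnerProductSpace ℝ H] [CompleteSpace H]
    [SecondCountableTopology H] [MeasurableSpace H] [BorelSpace H]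
    -- the family of maximally monotone operators, with its resolvents `JA ω = J_{A_ω}`
    -- and the resolvents `JAinv ω = J_{A_ω⁻¹}` of the inverses
    (A : Ω → H → Set H) (JA JAinv : Ω → H → H)
    (hAmax : ∀ ω, IsMaxMonotone (A ω))
    (hJA : ∀ ω, IsResolventOf (A ω) (JA ω))
    (hJAinv : ∀ ω, IsResolventOf (graphInv (A ω)) (JAinv ω))
    (hJAmeas : ∀ x : Ω → H, Measurable x → Measurable fun ω => JA ω (x ω))
    (hdom : ∃ x xs : Ω → H, Measurable x ∧ Measurable xs ∧
      (∫⁻ ω, (‖x ω‖₊ : ℝ≥0∞) ^ 2 ∂μ) < ⊤ ∧ (∫⁻ ω, (‖xs ω‖₊ : ℝ≥0∞) ^ 2 ∂μ) < ⊤ ∧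
      ∀ᵐ ω ∂μ, xs ω ∈ A ω (x ω))
    -- the family of bounded linear operators
    (L : Ω → X →L[ℝ] H)
    (hLmeas : ∀ ξ : X, Measurable fun ω => L ω ξ)
    (hLint : Integrable (fun ω => ‖L ω‖ ^ 2) μ)
    (hL0 : 0 < ∫ ω, ‖L ω‖ ^ 2 ∂μ) (hL1 : (∫ ω, ‖L ω‖ ^ 2 ∂μ) ≤ 1)
    (τ : ℝ) (hτ : 0 < τ) (a : Ω → H → H)
    (hsingle : ∀ ω (x : H), A ω x = {a ω x})
    (hcoco : ∀ ω (x y : H),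
      τ * ‖a ω x - a ω y‖ ^ 2 ≤ inner ℝ (x - y) (a ω x - a ω y)) :
    ∀ (ξ η u v : X),
      u ∈ graphInv (rmiOp fun ζ : X => ∫ ω, (L ω).adjoint (JAinv ω (L ω ζ)) ∂μ) ξ →
      v ∈ graphInv (rmiOp fun ζ : X => ∫ ω, (L ω).adjoint (JAinv ω (L ω ζ)) ∂μ) η →
      ((τ + 1) / (∫ ω, ‖L ω‖ ^ 2 ∂μ) - 1) * ‖u - v‖ ^ 2 ≤ inner ℝ (ξ - η) (u - v) := by
  intro ξ η u v hu hv
  simp only [graphInv, rmiOp, Set.mem_setOf_eq] at hu hv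
  set s : ℝ := ∫ ω, ‖L ω‖ ^ 2 ∂μ with hs_def
  -- basic resolvent identities
  have hres : ∀ ω z, JAinv ω z = a ω (z - JAinv ω z) := by
    intro ω z
    have h1 : z - JAinv ω z ∈ graphInv (A ω) (JAinv ω z) := (hJAinv ω z _).mp rfl
    have h2 : JAinv ω z ∈ A ω (z - JAinv ω z) := h1
    rw [hsingle] at h2
    exact h2
  have hTJA : ∀ ω z, JAinv ω z = z - JA ω z := by
    intro ω z
    have h1 : z - JA ω z ∈ A ω (JA ω z) := (hJA ω z _).mp rfl
    apply (hJAinv ω z (z - JA ω z)).mpr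
    show z - JA ω z ∈ A ω (z - (z - JA ω z))
    rw [sub_sub_cancel]
    exact h1
  -- cocoercivity of JAinv ω
  have hTcoco : ∀ ω (z w : H), (τ + 1) * ‖JAinv ω z - JAinv ω w‖ ^ 2
      ≤ inner ℝ (z - w) (JAinv ω z - JAinv ω w) := by
    intro ω z w
    have h1 := hcoco ω (z - JAinv ω z) (w - JAinv ω w)
    rw [← hres ω z, ← hres ω w] at h1
    have expand : ((z - JAinv ω z) - (w - JAinv ω w)) = (z - w) - (JAinv ω z - JAinv ω w) := by
      abel
    rw [expand, inner_sub_left] at h1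
    have h2 : (inner ℝ (JAinv ω z - JAinv ω w) (JAinv ω z - JAinv ω w) : ℝ)
        = ‖JAinv ω z - JAinv ω w‖ ^ 2 := real_inner_self_eq_norm_sq _
    rw [h2] at h1
    linarith
  have hTlip : ∀ ω (z w : H), ‖JAinv ω z - JAinv ω w‖ ≤ ‖z - w‖ := by
    intro ω z w
    have h1 := hTcoco ω z w
    have h2 := real_inner_le_norm (z - w) (JAinv ω z - JAinv ω w)
    nlinarith [norm_nonneg (JAinv ω z - JAinv ω w), norm_nonneg (z - w),
      sq_nonneg (‖JAinv ω z - JAinv ω w‖)]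
  -- measurability
  have hTmeas : ∀ (z : Ω → H), Measurable z → Measurable fun ω => JAinv ω (z ω) := by
    intro z hz
    have : (fun ω => JAinv ω (z ω)) = fun ω => z ω - JA ω (z ω) := by
      funext ω; exact hTJA ω (z ω)
    rw [this]
    exact hz.sub (hJAmeas z hz)
  have hadj : ∀ (g : Ω → H), Measurable g → Measurable fun ω => (L ω).adjoint (g ω) := by
    intro g hg
    apply measurable_of_inner_meas
    intro c
    have : (fun ω => (inner ℝ ((L ω).adjoint (g ω)) c : ℝ)) = fun ω => inner ℝ (g ω) (L ω c) := by
      funext ω; exact ContinuousLinearMap.adjoint_inner_left _ _ _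
    rw [this]
    exact hg.inner (hLmeas c)
  have hadjnorm : ∀ ω (y : H), ‖(L ω).adjoint y‖ ≤ ‖L ω‖ * ‖y‖ := by
    intro ω y
    have h1 : ‖(L ω).adjoint‖ = ‖L ω‖ := ContinuousLinearMap.adjoint.norm_map (L ω)
    calc ‖(L ω).adjoint y‖ ≤ ‖(L ω).adjoint‖ * ‖y‖ := (L ω).adjoint.le_opNorm y
      _ = ‖L ω‖ * ‖y‖ := by rw [h1]
  -- integrability from hdom
  obtain ⟨x, xs, hxm, hxsm, hxint, hxsint, hxa⟩ := hdom
  have hsq_int : ∀ (z : Ω → H), Measurable z → (∫⁻ ω, (‖z ω‖₊ : ℝ≥0∞) ^ 2 ∂μ) < ⊤ →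
      Integrable (fun ω => ‖z ω‖ ^ 2) μ := by
    intro z hz hzint
    refine ⟨(hz.norm.pow_const 2).aestronglyMeasurable, ?_⟩
    show (∫⁻ ω, (‖‖z ω‖ ^ 2‖₊ : ℝ≥0∞) ∂μ) < ⊤
    have : ∀ ω, (‖‖z ω‖ ^ 2‖₊ : ℝ≥0∞) = (‖z ω‖₊ : ℝ≥0∞) ^ 2 := by
      intro ω
      rw [nnnorm_pow, nnnorm_norm, ENNReal.coe_pow]
    simpa only [this] using hzint
  have hx2 := hsq_int x hxm hxint
  have hxs2 := hsq_int xs hxsm hxsint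
  -- the fixed point of JAinv
  have hfix : ∀ᵐ ω ∂μ, JAinv ω (x ω + xs ω) = xs ω := by
    filter_upwards [hxa] with ω hω
    apply (hJAinv ω (x ω + xs ω) (xs ω)).mpr
    show xs ω ∈ A ω (x ω + xs ω - xs ω)
    rw [add_sub_cancel_right]
    exact hω
  -- pointwise bound on ‖JAinv ω z‖, a.e. in ω
  have hbound : ∀ᵐ ω ∂μ, ∀ z : H, ‖JAinv ω z‖ ≤ ‖z‖ + ‖x ω‖ + 2 * ‖xs ω‖ := by
    filter_upwards [hfix] with ω hω z
    have h1 : ‖JAinv ω z - JAinv ω (x ω + xs ω)‖ ≤ ‖z - (x ω + xs ω)‖ := hTlip ω _ _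
    rw [hω] at h1
    have h2 : ‖JAinv ω z‖ ≤ ‖xs ω‖ + ‖JAinv ω z - xs ω‖ :=
      norm_le_norm_add_norm_sub' (JAinv ω z) (xs ω)
    have h3 : ‖z - (x ω + xs ω)‖ ≤ ‖z‖ + ‖x ω + xs ω‖ := norm_sub_le _ _
    have h4 : ‖x ω + xs ω‖ ≤ ‖x ω‖ + ‖xs ω‖ := norm_add_le _ _
    linarith
  -- integrand and its integrability
  set G : X → Ω → X := fun p ω => (L ω).adjoint (JAinv ω (L ω p)) with hG_def
  have hGmeas : ∀ p, Measurable (G p) := by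
    intro p
    exact hadj _ (hTmeas _ (hLmeas p))
  have hGint : ∀ p : X, Integrable (G p) μ := by
    intro p
    refine Integrable.mono'
      (g := fun ω => ‖L ω‖ ^ 2 * ‖p‖ + ((1/2) * ‖L ω‖ ^ 2 + ‖x ω‖ ^ 2 + 4 * ‖xs ω‖ ^ 2))
      (((hLint.mul_const _).add
        (((hLint.const_mul _).add hx2).add (hxs2.const_mul 4)))) ((hGmeas p).aestronglyMeasurable) ?_
    filter_upwards [hbound] with ω hω
    have h1 : ‖G p ω‖ ≤ ‖L ω‖ * ‖JAinv ω (L ω p)‖ := hadjnorm ω _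
    have h2 : ‖JAinv ω (L ω p)‖ ≤ ‖L ω p‖ + ‖x ω‖ + 2 * ‖xs ω‖ := hω _
    have h3 : ‖L ω p‖ ≤ ‖L ω‖ * ‖p‖ := (L ω).le_opNorm p
    have h4 : ‖L ω‖ * (‖x ω‖ + 2 * ‖xs ω‖) ≤
        (1/2) * ‖L ω‖ ^ 2 + ‖x ω‖ ^ 2 + 4 * ‖xs ω‖ ^ 2 := by
      nlinarith [sq_nonneg (‖L ω‖ - (‖x ω‖ + 2 * ‖xs ω‖)), sq_nonneg (‖x ω‖ - 2 * ‖xs ω‖),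
        norm_nonneg (L ω), norm_nonneg (x ω), norm_nonneg (xs ω)]
    have h5 : (0:ℝ) ≤ ‖L ω‖ := norm_nonneg _
    nlinarith [norm_nonneg (JAinv ω (L ω p)), norm_nonneg p]
  -- now the two points
  set p := u + ξ with hp_def
  set q := v + η with hq_def
  have hup : (∫ ω, G p ω ∂μ) = u := hu
  have hvq : (∫ ω, G q ω ∂μ) = v := hv
  -- ΔT
  set D : Ω → H := fun ω => JAinv ω (L ω p) - JAinv ω (L ω q) with hD_def
  have hDmeas : Measurable D := (hTmeas _ (hLmeas p)).sub (hTmeas _ (hLmeas q))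
  have hDb : ∀ ω, ‖D ω‖ ≤ ‖L ω‖ * ‖p - q‖ := by
    intro ω
    calc ‖D ω‖ ≤ ‖L ω p - L ω q‖ := hTlip ω _ _
      _ = ‖L ω (p - q)‖ := by rw [map_sub]
      _ ≤ ‖L ω‖ * ‖p - q‖ := (L ω).le_opNorm _
  have hD2int : Integrable (fun ω => ‖D ω‖ ^ 2) μ := by
    refine Integrable.mono' (g := fun ω => ‖L ω‖ ^ 2 * ‖p - q‖ ^ 2)
      (hLint.mul_const _) ((hDmeas.norm.pow_const 2).aestronglyMeasurable) ?_
    filter_upwards with ω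
    have := hDb ω
    have h0 : (0:ℝ) ≤ ‖D ω‖ := norm_nonneg _
    have h1 : (0:ℝ) ≤ ‖L ω‖ * ‖p - q‖ := le_trans h0 this
    rw [Real.norm_eq_abs, abs_of_nonneg (sq_nonneg _)]
    nlinarith
  set I : ℝ := ∫ ω, ‖D ω‖ ^ 2 ∂μ with hI_def
  have hI0 : 0 ≤ I := integral_nonneg fun ω => sq_nonneg _
  -- inner ℝ product identity
  have hinner_int : Integrable (fun ω => (inner ℝ (L ω (p - q)) (D ω) : ℝ)) μ := by
    refine Integrable.mono' (g := fun ω => ‖L ω‖ ^ 2 * (‖p - q‖ * ‖p - q‖))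
      (hLint.mul_const _) ?_ ?_
    · exact ((hLmeas (p - q)).inner hDmeas).aestronglyMeasurable
    · filter_upwards with ω
      have h1 := abs_real_inner_le_norm (L ω (p - q)) (D ω)
      have h2 : ‖L ω (p - q)‖ ≤ ‖L ω‖ * ‖p - q‖ := (L ω).le_opNorm _
      have h3 := hDb ω
      have h4 : (0:ℝ) ≤ ‖L ω‖ * ‖p - q‖ := le_trans (norm_nonneg _) h3
      rw [Real.norm_eq_abs]
      nlinarith [norm_nonneg (D ω), norm_nonneg (L ω (p-q))]
  have hkey1 : (inner ℝ (p - q) (u - v) : ℝ) = ∫ ω, (inner ℝ (L ω (p - q)) (D ω) : ℝ) ∂μ := by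
    rw [← hup, ← hvq, ← integral_sub (hGint p) (hGint q)]
    have h := integral_inner (𝕜 := ℝ) ((hGint p).sub (hGint q)) (p - q)
    simp only [Pi.sub_apply] at h
    rw [← h]
    congr 1
    funext ω
    show (inner ℝ (p - q) (G p ω - G q ω) : ℝ) = _
    have : G p ω - G q ω = (L ω).adjoint (D ω) := by
      rw [hG_def, hD_def]
      simp [map_sub]
    rw [this]
    exact (ContinuousLinearMap.adjoint_inner_right (L ω) (p - q) (D ω))
  -- lower bound on the inner ℝ product
  have hkey2 : (τ + 1) * I ≤ (inner ℝ (p - q) (u - v) : ℝ) := by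
    rw [hkey1, hI_def, ← integral_const_mul]
    apply integral_mono (hD2int.const_mul _) hinner_int
    intro ω
    have h1 := hTcoco ω (L ω p) (L ω q)
    have h2 : L ω p - L ω q = L ω (p - q) := (map_sub _ _ _).symm
    rw [h2] at h1
    exact h1
  -- norm bound: ‖u - v‖² ≤ s * I  via quadratic discriminant
  set N : ℝ := ‖u - v‖ with hN_def
  have hN0 : 0 ≤ N := norm_nonneg _
  have hquad : ∀ t : ℝ, 0 ≤ s * (t * t) + (-(2 * N)) * t + I := by
    intro t
    rcases le_or_gt t 0 with ht | ht
    · have hs0 : 0 ≤ s := le_of_lt hL0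
      nlinarith [mul_nonneg hs0 (mul_self_nonneg t)]
    · -- for t > 0 : 2 N t ≤ s t² + I, from N ≤ ∫ ‖L‖‖D‖ ≤ ∫ (t‖L‖² + ‖D‖²/t)/2
      have hNle : N ≤ (t * s + I / t) / 2 := by
        have step1 : N ≤ ∫ ω, ‖G p ω - G q ω‖ ∂μ := by
          rw [hN_def, ← hup, ← hvq, ← integral_sub (hGint p) (hGint q)]
          exact norm_integral_le_integral_norm _
        have hGD : ∀ ω, ‖G p ω - G q ω‖ ≤ ‖L ω‖ * ‖D ω‖ := by
          intro ω
          have : G p ω - G q ω = (L ω).adjoint (D ω) := by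
            rw [hG_def, hD_def]; simp [map_sub]
          rw [this]
          exact hadjnorm ω _
        have step2 : ∫ ω, ‖G p ω - G q ω‖ ∂μ
            ≤ ∫ ω, (t * ‖L ω‖ ^ 2 + ‖D ω‖ ^ 2 / t) / 2 ∂μ := by
          apply integral_mono (((hGint p).sub (hGint q)).norm)
          · exact (((hLint.const_mul t).add (hD2int.div_const t)).div_const 2)
          · intro ω
            have h1 := hGD ω
            have h2 : ‖L ω‖ * ‖D ω‖ ≤ (t * ‖L ω‖ ^ 2 + ‖D ω‖ ^ 2 / t) / 2 := by
              have ht2 : ‖D ω‖ ^ 2 / t * t = ‖D ω‖ ^ 2 := div_mul_cancel₀ _ (ne_of_gt ht)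
              nlinarith [sq_nonneg (t * ‖L ω‖ - ‖D ω‖), ht, ht2, mul_pos ht ht]
            show ‖G p ω - G q ω‖ ≤ (t * ‖L ω‖ ^ 2 + ‖D ω‖ ^ 2 / t) / 2
            linarith
        have step3 : (∫ ω, (t * ‖L ω‖ ^ 2 + ‖D ω‖ ^ 2 / t) / 2 ∂μ) = (t * s + I / t) / 2 := by
          rw [integral_div, integral_add (hLint.const_mul t) (hD2int.div_const t),
            integral_const_mul, integral_div]
        linarith [step1.trans (step2.trans_eq step3)]
      have ht' : t ≠ 0 := ne_of_gt ht
      have hIt : I / t * t = I := div_mul_cancel₀ I ht'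
      nlinarith [hNle, ht]
  have hdisc := discrim_le_zero hquad
  have hN2I : N ^ 2 ≤ s * I := by
    rw [discrim] at hdisc
    nlinarith [hdisc]
  -- conclusion
  have hξη : ξ - η = (p - q) - (u - v) := by
    rw [hp_def, hq_def]; abel
  have hfinal : (inner ℝ (ξ - η) (u - v) : ℝ)
      = (inner ℝ (p - q) (u - v) : ℝ) - N ^ 2 := by
    rw [hξη, inner_sub_left, real_inner_self_eq_norm_sq]
  rw [hfinal]
  have hs_pos : 0 < s := hL0
  have hdivs : (τ + 1) / s * s = τ + 1 := div_mul_cancel₀ _ (ne_of_gt hs_pos)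
  have h6 : (τ + 1) / s * N ^ 2 ≤ (τ + 1) * I := by
    have h7 : (τ + 1) / s * N ^ 2 ≤ (τ + 1) / s * (s * I) := by
      apply mul_le_mul_of_nonneg_left hN2I
      positivity
    calc (τ + 1) / s * N ^ 2 ≤ (τ + 1) / s * (s * I) := h7
      _ = ((τ + 1) / s * s) * I := by ring
      _ = (τ + 1) * I := by rw [hdivs]
  nlinarith [hkey2, h6]
end
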